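/- Let 1 ≤ k ≤ n and X ∈ 𝒳_{n×k} with columns x^{(1)},…,x^{(k)}. Then: (i) for each i ≠ j in {1,…,k} and each row l ∈ {1,…,n}, either x^{(i)}_l = 0 or x^{(j)}_l = 0; (ii) every entry of X lies in [0,1]; (iii) for each column i there exists a row l with x^{(i)}_l = 1 and x^{(j)}_l = 0 for all j ≠ i; consequently (iv) X has a k×k submatrix (obtained by selecting k rows) that is a permutation matrix. -/

import Mathlib

open Matrix

/-- Max-algebra matrix product: `(A ⊗ B) i j = max_p (A i p * B p j)`. -/
noncomputable def maxMul {n m l : ℕ} (A : Matrix (Fin n) (Fin m) ℝ)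
    (B : Matrix (Fin m) (Fin l) ℝ) : Matrix (Fin n) (Fin l) ℝ :=
  Matrix.of fun i j => ⨆ p, A i p * B p j

/-- Max trace: `tr⊗(A) = max_i A i i`. -/
noncomputable def trMax {n : ℕ} (A : Matrix (Fin n) (Fin n) ℝ) : ℝ := ⨆ i, A i i

/-- The set 𝒳_{n×k} of nonnegative `n×k` matrices with `Xᵀ ⊗ X = I_k`. -/
def Xset (n k : ℕ) : Set (Matrix (Fin n) (Fin k) ℝ) :=
  {X | (∀ i j, 0 ≤ X i j) ∧ maxMul Xᵀ X = 1}

/-- The max `k`-numerical range `W_max^k(A) = { tr⊗(Xᵀ⊗A⊗X) : X ∈ 𝒳_{n×k} }`. -/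
noncomputable def Wmax {n : ℕ} (k : ℕ) (A : Matrix (Fin n) (Fin n) ℝ) : Set ℝ :=
  {z | ∃ X ∈ Xset n k, z = trMax (maxMul (maxMul Xᵀ A) X)}

/-- Properties of `X ∈ 𝒳_{n×k}` (columns `x^{(i)} = fun l => X l i`):
(i) two distinct columns have disjoint supports; (ii) all entries lie in `[0,1]`;
(iii) each column has a row where it is `1` and all other columns vanish;
(iv) `X` has a `k × k` submatrix (a choice of `k` rows) that is a permutation matrix. -/
theorem stmt_5 {n k : ℕ} (hk : 1 ≤ k) (hkn : k ≤ n)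
    (X : Matrix (Fin n) (Fin k) ℝ) (hX : X ∈ Xset n k) :
    (∀ i j : Fin k, i ≠ j → ∀ l : Fin n, X l i = 0 ∨ X l j = 0) ∧
    (∀ (l : Fin n) (i : Fin k), X l i ∈ Set.Icc (0 : ℝ) 1) ∧
    (∀ i : Fin k, ∃ l : Fin n, X l i = 1 ∧ ∀ j : Fin k, j ≠ i → X l j = 0) ∧
    (∃ r : Fin k → Fin n, Function.Injective r ∧ ∃ σ : Equiv.Perm (Fin k),
      ∀ p q : Fin k, X (r p) q = if σ p = q then 1 else 0) := by
  obtain ⟨hnonneg, hprod⟩ := hX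
  have hn : 0 < n := lt_of_lt_of_le hk hkn
  haveI : Nonempty (Fin n) := ⟨⟨0, hn⟩⟩
  -- key: for all i j, ⨆ l, X l i * X l j = if i = j then 1 else 0
  have key : ∀ i j : Fin k, (⨆ l, X l i * X l j) = if i = j then (1:ℝ) else 0 := by
    intro i j
    have := congrFun (congrFun hprod i) j
    simpa [maxMul, Matrix.one_apply] using this
  have hle : ∀ (i j : Fin k) (l : Fin n),
      X l i * X l j ≤ ⨆ m, X m i * X m j := fun i j l =>
    le_ciSup (f := fun m => X m i * X m j) (Set.Finite.bddAbove (Set.finite_range _)) l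
  -- (i)
  have part1 : ∀ i j : Fin k, i ≠ j → ∀ l : Fin n, X l i = 0 ∨ X l j = 0 := by
    intro i j hij l
    have h1 : X l i * X l j ≤ 0 := by
      have := hle i j l
      rwa [key i j, if_neg hij] at this
    have h2 : 0 ≤ X l i * X l j := mul_nonneg (hnonneg l i) (hnonneg l j)
    have : X l i * X l j = 0 := le_antisymm h1 h2
    rcases mul_eq_zero.mp this with h | h
    · exact Or.inl h
    · exact Or.inr h
  -- (ii)
  have part2 : ∀ (l : Fin n) (i : Fin k), X l i ∈ Set.Icc (0:ℝ) 1 := by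
    intro l i
    refine ⟨hnonneg l i, ?_⟩
    have h1 : X l i * X l i ≤ 1 := by
      have := hle i i l
      rwa [key i i, if_pos rfl] at this
    nlinarith [hnonneg l i]
  -- (iii)
  have part3 : ∀ i : Fin k, ∃ l : Fin n, X l i = 1 ∧ ∀ j : Fin k, j ≠ i → X l j = 0 := by
    intro i
    obtain ⟨l, hl⟩ := Finite.exists_max (fun l => X l i * X l i)
    have hsup : (⨆ m, X m i * X m i) = X l i * X l i :=
      le_antisymm (ciSup_le hl) (hle i i l)
    have h1 : X l i * X l i = 1 := by
      rw [← hsup, key i i, if_pos rfl]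
    have hXl : X l i = 1 := by nlinarith [hnonneg l i]
    refine ⟨l, hXl, fun j hj => ?_⟩
    rcases part1 i j (Ne.symm hj) l with h | h
    · rw [hXl] at h; norm_num at h
    · exact h
  refine ⟨part1, part2, part3, ?_⟩
  -- (iv)
  choose r hr1 hr2 using part3
  refine ⟨r, ?_, Equiv.refl _, ?_⟩
  · intro i j hij
    by_contra h
    have := hr2 j i h
    rw [← hij, hr1 i] at this
    norm_num at this
  · intro p q
    rcases eq_or_ne p q with h | h
    · simp [← h, hr1 p]
    · simp only [Equiv.refl_apply, if_neg h]
      exact (hr2 p q (Ne.symm h)).trans (if_neg h).symm
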